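/- Let ρ, T > 0 and α_N = e^{-ρT/N}. With κ = 1/2, define ω-partial sums S_n^{(N)} = 2[ n(1 - 2α_N/(1+α_N)) + (-1)^{N+1} · 2 α_N^{N+2-n}((-1)^n - α_N^n)/(1+α_N)^2 ]. Then the total sum S_{N+1}^{(N)} converges to e^{-ρT} + ρT + 1 along even N and to -e^{-ρT} + ρT + 1 along odd N. -/

import Mathlib

open Real Filter

lemma aux_limit (ρ T : ℝ) (hρ : 0 < ρ) (hT : 0 < T) (ε : ℝ)
    (φ : ℕ → ℕ) (hφ : Tendsto φ atTop atTop) :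
    Tendsto (fun N : ℕ =>
      2*(((φ N : ℝ)+1)*(1 - 2*Real.exp (-ρ*T/(φ N))/(1+Real.exp (-ρ*T/(φ N))))
        + ε * 2*(Real.exp (-ρ*T/(φ N)))
            * (ε - (Real.exp (-ρ*T/(φ N)))^(φ N+1))
            / (1+Real.exp (-ρ*T/(φ N)))^2))
      atTop (nhds (ε*(ε - Real.exp (-ρ*T)) + ρ*T)) := by
  have hρT : (0:ℝ) < ρ*T := mul_pos hρ hT
  have hρT' : ρ*T ≠ 0 := ne_of_gt hρT
  have hx : Tendsto (fun n:ℕ => -ρ*T/(n:ℝ)) atTop (nhds 0) := by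
    have h := tendsto_one_div_atTop_nhds_zero_nat.const_mul (-ρ*T)
    rw [mul_zero] at h
    exact h.congr (fun n => by rw [mul_one_div])
  have hA : Tendsto (fun n:ℕ => Real.exp (-ρ*T/(n:ℝ))) atTop (nhds 1) := by
    have h := (Real.continuous_exp.tendsto 0).comp hx
    simpa [Function.comp_def] using h
  have hslope : Tendsto (fun x : ℝ => (Real.exp x - 1)/x) (nhdsWithin 0 {0}ᶜ) (nhds 1) := by
    have h := Real.hasDerivAt_exp 0
    rw [hasDerivAt_iff_tendsto_slope] at h
    simp only [slope_fun_def, Real.exp_zero, vsub_eq_sub, sub_zero] at h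
    exact (by simpa using h : Tendsto (fun x : ℝ => x⁻¹ * (Real.exp x - 1)) (nhdsWithin 0 {0}ᶜ) (nhds 1)).congr
      (fun x => (div_eq_inv_mul _ _).symm)
  have hxW : Tendsto (fun n:ℕ => -ρ*T/(n:ℝ)) atTop (nhdsWithin 0 {0}ᶜ) := by
    apply tendsto_nhdsWithin_of_tendsto_nhds_of_eventually_within _ hx
    filter_upwards [eventually_ge_atTop 1] with n hn
    have hn0 : (n:ℝ) ≠ 0 := by positivity
    simp only [Set.mem_compl_iff, Set.mem_singleton_iff]
    exact div_ne_zero (by simpa using (neg_ne_zero.mpr hρT')) hn0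
  have hN : Tendsto (fun n:ℕ => (n:ℝ)*(1 - Real.exp (-ρ*T/(n:ℝ)))) atTop (nhds (ρ*T)) := by
    have h := (hslope.comp hxW).const_mul (ρ*T)
    rw [mul_one] at h
    apply h.congr'
    filter_upwards [eventually_ge_atTop 1] with n hn
    have hn0 : (n:ℝ) ≠ 0 := by positivity
    simp only [Function.comp]
    field_simp
    ring
  have hL2 : Tendsto (fun n:ℕ => ((n:ℝ)+1)*(1 - Real.exp (-ρ*T/(n:ℝ)))) atTop (nhds (ρ*T)) := by
    have h0 : Tendsto (fun n:ℕ => (1:ℝ) - Real.exp (-ρ*T/(n:ℝ))) atTop (nhds 0) := by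
      have := (tendsto_const_nhds (x := (1:ℝ)) (f := atTop (α := ℕ))).sub hA
      simpa using this
    have h := hN.add h0
    rw [add_zero] at h
    exact h.congr (fun n => by ring)
  have hpow : Tendsto (fun n:ℕ => (Real.exp (-ρ*T/(n:ℝ)))^(n+1)) atTop
      (nhds (Real.exp (-ρ*T))) := by
    have hq : Tendsto (fun n:ℕ => ((n:ℝ)+1) * (-ρ*T/(n:ℝ))) atTop (nhds (-ρ*T)) := by
      have h := (tendsto_const_nhds (x := -ρ*T) (f := atTop (α := ℕ))).add hx
      rw [add_zero] at h
      apply h.congr'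
      filter_upwards [eventually_ge_atTop 1] with n hn
      have hn0 : (n:ℝ) ≠ 0 := by positivity
      field_simp
      ring
    have h := (Real.continuous_exp.tendsto _).comp hq
    apply h.congr
    intro n
    simp only [Function.comp]
    rw [← Real.exp_nat_mul]
    congr 1
    push_cast
    ring
  have hAφ := hA.comp hφ
  have t1 := hL2.comp hφ
  have t2 : Tendsto (fun N => 1 + Real.exp (-ρ*T/(φ N : ℝ))) atTop (nhds (1+1)) :=
    tendsto_const_nhds.add hAφ
  have t3 := hpow.comp hφ
  have t4 : Tendsto (fun N => ε * 2 * Real.exp (-ρ*T/(φ N : ℝ))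
      * (ε - (Real.exp (-ρ*T/(φ N : ℝ)))^(φ N+1))) atTop
      (nhds (ε * 2 * 1 * (ε - Real.exp (-ρ*T)))) :=
    (tendsto_const_nhds.mul hAφ).mul (tendsto_const_nhds.sub t3)
  have H := ((t1.div t2 (by norm_num)).add (t4.div (t2.pow 2) (by norm_num))).const_mul 2
  have hval : ε*(ε - Real.exp (-ρ*T)) + ρ*T
      = 2 * (ρ*T/(1+1) + ε*2*1*(ε - Real.exp (-ρ*T))/(1+1)^2) := by ring
  rw [hval]
  apply H.congr
  intro N
  have hE : (0:ℝ) < Real.exp (-ρ*T/(φ N : ℝ)) := Real.exp_pos _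
  have h1a : (1:ℝ) + Real.exp (-ρ*T/(φ N : ℝ)) ≠ 0 := by positivity
  simp only [Pi.div_apply, Function.comp]
  field_simp
  ring

theorem omega_sum_two_accumulation_points (ρ T : ℝ)
    (hρ : 0 < ρ) (hT : 0 < T)
    (S : ℕ → ℝ)
    (hS : ∀ N : ℕ,
      S N = 2*(((N : ℝ)+1)*(1 - 2*Real.exp (-ρ*T/N)/(1+Real.exp (-ρ*T/N)))
        + (-1:ℝ)^(N+1) * 2*(Real.exp (-ρ*T/N))^(N+2-(N+1))
            * ((-1:ℝ)^(N+1) - (Real.exp (-ρ*T/N))^(N+1))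
            / (1+Real.exp (-ρ*T/N))^2)) :
    Tendsto (fun N : ℕ => S (2*N)) atTop (nhds (Real.exp (-ρ*T) + ρ*T + 1)) ∧
    Tendsto (fun N : ℕ => S (2*N+1)) atTop (nhds (-Real.exp (-ρ*T) + ρ*T + 1)) := by
  have hev : Tendsto (fun N : ℕ => 2*N) atTop atTop :=
    tendsto_atTop_mono (fun n => by change n ≤ _; omega) tendsto_id
  have hod : Tendsto (fun N : ℕ => 2*N+1) atTop atTop :=
    tendsto_atTop_mono (fun n => by change n ≤ _; omega) tendsto_id
  constructor
  · have H := aux_limit ρ T hρ hT (-1) (fun N => 2*N) hev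
    have hval : Real.exp (-ρ*T) + ρ*T + 1 = (-1:ℝ)*((-1) - Real.exp (-ρ*T)) + ρ*T := by ring
    rw [hval]
    apply H.congr
    intro N
    have e1 : 2*N+2-(2*N+1) = 1 := by omega
    have hpar : ((-1:ℝ))^(2*N+1) = -1 := Odd.neg_one_pow ⟨N, by ring⟩
    rw [hS (2*N), e1, pow_one, hpar]
  · have H := aux_limit ρ T hρ hT 1 (fun N => 2*N+1) hod
    have hval : -Real.exp (-ρ*T) + ρ*T + 1 = (1:ℝ)*((1) - Real.exp (-ρ*T)) + ρ*T := by ring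
    rw [hval]
    apply H.congr
    intro N
    have e1 : 2*N+1+2-(2*N+1+1) = 1 := by omega
    have hpar : ((-1:ℝ))^(2*N+1+1) = 1 := Even.neg_one_pow ⟨N+1, by ring⟩
    rw [hS (2*N+1), e1, pow_one, hpar]
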